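/- Let K be a totally real number field and 𝒪⁺ its totally positive integers; write α ⪰ 0 if α is totally positive or zero. For every δ ∈ 𝒪⁺ and every positive integer m, the number of chain partitions of δ with at most m parts equals the number of solutions (x_1, …, x_m) to δ = x_1 + 2x_2 + ⋯ + m x_m with each x_i ⪰ 0. -/

import Mathlib

open NumberField

/-- `x ∈ 𝓞 K` is totally positive if every real embedding of `K` sends it to a
positive real number. -/
def IsTotallyPositive (K : Type*) [Field K] [NumberField K] (x : 𝓞 K) : Prop :=
  ∀ φ : K →+* ℝ, 0 < φ (x : K)

/-- `x ⪰ 0`: `x` is totally positive or zero. -/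
def Succeq (K : Type*) [Field K] [NumberField K] (x : 𝓞 K) : Prop :=
  x = 0 ∨ IsTotallyPositive K x

section ChainAux

variable {K : Type*} [Field K] [NumberField K]

lemma succeq_zero' : Succeq K (0 : 𝓞 K) := Or.inl rfl

lemma totallyPositive_add_succeq' {a b : 𝓞 K} (ha : IsTotallyPositive K a)
    (hb : Succeq K b) : IsTotallyPositive K (a + b) := by
  intro φ
  rcases hb with rfl | hb
  · simpa using ha φ
  · have h1 := ha φ
    have h2 := hb φ
    have hc : ((a + b : 𝓞 K) : K) = (a : K) + (b : K) := by push_cast; ring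
    rw [hc, map_add]
    positivity

lemma succeq_add' {a b : 𝓞 K} (ha : Succeq K a) (hb : Succeq K b) :
    Succeq K (a + b) := by
  rcases ha with rfl | ha
  · simpa using hb
  · exact Or.inr (totallyPositive_add_succeq' ha hb)

lemma succeq_sum' {ι : Type*} (s : Finset ι) (f : ι → 𝓞 K)
    (h : ∀ i ∈ s, Succeq K (f i)) : Succeq K (∑ i ∈ s, f i) :=
  Finset.sum_induction f _ (fun _ _ ha hb => succeq_add' ha hb) succeq_zero' h

lemma exists_real_embedding' (hTR : ∀ φ : K →+* ℂ, ∀ x : K, (φ x).im = 0) :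
    Nonempty (K →+* ℝ) := by
  obtain ⟨φ⟩ : Nonempty (K →+* ℂ) := inferInstance
  refine ⟨{ toFun := fun x => (φ x).re, map_one' := by simp, map_zero' := by simp,
            map_add' := fun x y => by simp,
            map_mul' := fun x y => by
              simp only [map_mul, Complex.mul_re, hTR φ x, hTR φ y]
              ring }⟩

lemma tp_ne_zero' (ψ : K →+* ℝ) {a : 𝓞 K} (h : IsTotallyPositive K a) : a ≠ 0 := by
  intro h0
  have := h ψ
  rw [h0] at this
  simp at this

/-- The partial-sum function: `nuAux m x j = ∑_{i ≥ rev j} x i`. -/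
noncomputable def nuAux (m : ℕ) (x : Fin m → 𝓞 K) (j : Fin m) : 𝓞 K :=
  ∑ i ∈ Finset.Ici j.rev, x i

lemma nuAux_zero (m : ℕ) (x : Fin m → 𝓞 K) (h0 : 0 < m) :
    nuAux m x ⟨0, h0⟩ = x ⟨m - 1, by omega⟩ := by
  unfold nuAux
  have h : Finset.Ici (Fin.rev ⟨0, h0⟩) = {(⟨m - 1, by omega⟩ : Fin m)} := by
    ext i
    simp only [Finset.mem_Ici, Finset.mem_singleton, Fin.le_def, Fin.ext_iff, Fin.val_rev]
    have := i.isLt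
    omega
  rw [h, Finset.sum_singleton]

lemma nuAux_succ (m : ℕ) (x : Fin m → 𝓞 K) (k : ℕ) (hk : k + 1 < m) :
    nuAux m x ⟨k + 1, hk⟩ = x ⟨m - 2 - k, by omega⟩ + nuAux m x ⟨k, by omega⟩ := by
  classical
  unfold nuAux
  have hins : Finset.Ici (Fin.rev ⟨k + 1, hk⟩) =
      insert (⟨m - 2 - k, by omega⟩ : Fin m) (Finset.Ici (Fin.rev ⟨k, by omega⟩)) := by
    ext i
    simp only [Finset.mem_Ici, Finset.mem_insert, Fin.le_def, Fin.ext_iff, Fin.val_rev]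
    have := i.isLt
    omega
  rw [hins, Finset.sum_insert]
  simp only [Finset.mem_Ici, Fin.le_def, Fin.val_rev]
  omega

lemma nuAux_sub_succeq {m : ℕ} (x : Fin m → 𝓞 K) (hx : ∀ i, Succeq K (x i))
    {j j' : Fin m} (h : j ≤ j') : Succeq K (nuAux m x j' - nuAux m x j) := by
  classical
  have hsub : Finset.Ici j.rev ⊆ Finset.Ici j'.rev :=
    Finset.Ici_subset_Ici.mpr (Fin.rev_le_rev.mpr h)
  rw [nuAux, nuAux, ← Finset.sum_sdiff_eq_sub hsub]
  exact succeq_sum' _ _ (fun i _ => hx i)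

lemma nuAux_succeq {m : ℕ} (x : Fin m → 𝓞 K) (hx : ∀ i, Succeq K (x i))
    (j : Fin m) : Succeq K (nuAux m x j) :=
  succeq_sum' _ _ (fun i _ => hx i)

lemma sum_nuAux (m : ℕ) (x : Fin m → 𝓞 K) :
    ∑ j, nuAux m x j = ∑ i : Fin m, ((i : ℕ) + 1) • x i := by
  classical
  have hIci : ∀ a : Fin m, Finset.Ici a = Finset.univ.filter (fun i => a ≤ i) := by
    intro a; ext i; simp
  calc ∑ j, nuAux m x j
      = ∑ j : Fin m, ∑ i : Fin m, if Fin.rev j ≤ i then x i else 0 := by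
        refine Finset.sum_congr rfl fun j _ => ?_
        rw [nuAux, hIci, Finset.sum_filter]
    _ = ∑ i : Fin m, ∑ j : Fin m, if Fin.rev j ≤ i then x i else 0 := Finset.sum_comm
    _ = ∑ i : Fin m, ((i : ℕ) + 1) • x i := by
        refine Finset.sum_congr rfl fun i _ => ?_
        have hcond : ∀ j : Fin m, (Fin.rev j ≤ i) = (Fin.rev i ≤ j) := fun j =>
          propext Fin.rev_le_iff
        simp_rw [hcond]
        rw [← Finset.sum_filter, ← hIci, Finset.sum_const]
        congr 1
        rw [Fin.card_Ici]
        have := i.isLt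
        simp only [Fin.val_rev]
        omega

lemma nuAux_injective {m : ℕ} (x y : Fin m → 𝓞 K) (h : nuAux m x = nuAux m y) :
    x = y := by
  funext i
  suffices hkey : ∀ j : Fin m, x j.rev = y j.rev by
    have := hkey i.rev
    rwa [Fin.rev_rev] at this
  rintro ⟨jv, hj⟩
  match jv, hj with
  | 0, hj =>
    have h0 : Fin.rev (⟨0, hj⟩ : Fin m) = ⟨m - 1, by omega⟩ := by
      ext; simp [Fin.val_rev]
    rw [h0, ← nuAux_zero m x hj, ← nuAux_zero m y hj, h]
  | (k+1), hj =>
    have h0 : Fin.rev (⟨k+1, hj⟩ : Fin m) = ⟨m - 2 - k, by omega⟩ := by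
      ext
      simp only [Fin.val_rev]
      omega
    rw [h0]
    have hx : x ⟨m - 2 - k, by omega⟩ =
        nuAux m x ⟨k+1, hj⟩ - nuAux m x ⟨k, by omega⟩ := by
      rw [nuAux_succ m x k hj]; ring
    have hy : y ⟨m - 2 - k, by omega⟩ =
        nuAux m y ⟨k+1, hj⟩ - nuAux m y ⟨k, by omega⟩ := by
      rw [nuAux_succ m y k hj]; ring
    rw [hx, hy, h]

end ChainAux

/-- the number of chain partitions of a totally positive `δ` with at most
`m` parts (recorded as weakly increasing lists: consecutive differences are `⪰ 0`) equals
the number of solutions `(x₁, …, x_m)`, `xᵢ ⪰ 0`, of `δ = x₁ + 2x₂ + ⋯ + m·x_m`. -/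
theorem chain_partitions_eq_weighted_solutions
    (K : Type*) [Field K] [NumberField K]
    (hTR : ∀ φ : K →+* ℂ, ∀ x : K, (φ x).im = 0)
    (δ : 𝓞 K) (hδ : IsTotallyPositive K δ) (m : ℕ) (hm : 0 < m) :
    {l : List (𝓞 K) | l.length ≤ m ∧ (∀ x ∈ l, IsTotallyPositive K x) ∧
        l.Chain' (fun a b => Succeq K (b - a)) ∧ l.sum = δ}.ncard =
    {x : Fin m → 𝓞 K | (∀ i, Succeq K (x i)) ∧
        ∑ i : Fin m, ((i : ℕ) + 1) • x i = δ}.ncard := by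
  classical
  obtain ⟨ψ⟩ := exists_real_embedding' hTR
  have hδ0 : δ ≠ 0 := tp_ne_zero' ψ hδ
  set p : 𝓞 K → Bool := fun a => decide (a = 0) with hp
  set f : (Fin m → 𝓞 K) → List (𝓞 K) :=
    fun x => (List.ofFn (nuAux m x)).dropWhile p with hfdef
  -- canonical decomposition
  have hcanon : ∀ x : Fin m → 𝓞 K,
      List.ofFn (nuAux m x) =
        List.replicate (((List.ofFn (nuAux m x)).takeWhile p).length) 0 ++ f x := by
    intro x
    conv_lhs => rw [← List.takeWhile_append_dropWhile (p := p) (l := List.ofFn (nuAux m x))]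
    congr 1
    apply List.eq_replicate_length.mpr
    intro b hb
    have := List.mem_takeWhile_imp hb
    simpa [hp] using this
  have hlen : ∀ x : Fin m → 𝓞 K,
      ((List.ofFn (nuAux m x)).takeWhile p).length + (f x).length = m := by
    intro x
    have := congrArg List.length (hcanon x)
    simpa using this.symm
  suffices hB : Set.BijOn f
      {x : Fin m → 𝓞 K | (∀ i, Succeq K (x i)) ∧ ∑ i : Fin m, ((i : ℕ) + 1) • x i = δ}
      {l : List (𝓞 K) | l.length ≤ m ∧ (∀ x ∈ l, IsTotallyPositive K x) ∧
        l.Chain' (fun a b => Succeq K (b - a)) ∧ l.sum = δ} by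
    rw [← hB.image_eq, Set.ncard_image_of_injOn hB.injOn]
  refine ⟨?_, ?_, ?_⟩
  · -- MapsTo
    rintro x ⟨hx1, hx2⟩
    set t := ((List.ofFn (nuAux m x)).takeWhile p).length with htdef
    have hlx : t + (f x).length = m := hlen x
    have hidx : ∀ k (hk : k < (f x).length), (f x)[k] = nuAux m x ⟨t + k, by omega⟩ := by
      intro k hk
      have h1 : (List.ofFn (nuAux m x))[t + k]'(by simp; omega) = (f x)[k] := by
        rw [List.getElem_of_eq (hcanon x)]
        rw [List.getElem_append_right (by simp [htdef])]
        simp [htdef]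
      rw [← h1, List.getElem_ofFn]
    refine ⟨by omega, ?_, ?_, ?_⟩
    · -- members are totally positive
      intro y hy
      obtain ⟨k, hk, rfl⟩ := List.mem_iff_getElem.mp hy
      have hne : f x ≠ [] := by
        intro h; rw [h] at hk; simp at hk
      have hheadne : nuAux m x ⟨t, by omega⟩ ≠ 0 := by
        have hh := List.head_dropWhile_not p (l := List.ofFn (nuAux m x)) (by exact hne)
        have ht0 : (⟨t + 0, by omega⟩ : Fin m) = ⟨t, by omega⟩ := by ext; simp
        have hh0 : (f x).head hne = nuAux m x ⟨t, by omega⟩ := by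
          rw [List.head_eq_getElem, hidx 0 (by omega), ht0]
        rw [hh0] at hh
        simpa [hp] using hh
      have htp : IsTotallyPositive K (nuAux m x ⟨t, by omega⟩) := by
        rcases nuAux_succeq x hx1 ⟨t, by omega⟩ with h | h
        · exact absurd h hheadne
        · exact h
      rw [hidx k hk]
      have heq : nuAux m x ⟨t + k, by omega⟩ =
          nuAux m x ⟨t, by omega⟩ +
            (nuAux m x ⟨t + k, by omega⟩ - nuAux m x ⟨t, by omega⟩) := by ring
      rw [heq]
      exact totallyPositive_add_succeq' htp
        (nuAux_sub_succeq x hx1 (by simp [Fin.le_def]))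
    · -- chain
      have hchain : (List.ofFn (nuAux m x)).Chain' (fun a b => Succeq K (b - a)) := by
      -- chain on full list
        apply List.isChain_iff_getElem.mpr
        intro i hi
        simp only [List.getElem_ofFn]
        apply nuAux_sub_succeq x hx1
        simp only [Fin.le_def]
        simp
      exact hchain.suffix (List.dropWhile_suffix p)
    · -- sum
      have hs := congrArg List.sum (hcanon x)
      rw [List.sum_append, List.sum_replicate, List.sum_ofFn, sum_nuAux, hx2] at hs
      simpa using hs.symm
  · -- InjOn
    rintro x ⟨hx1, hx2⟩ y ⟨hy1, hy2⟩ hxy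
    apply nuAux_injective
    have hl1 := hlen x
    have hl2 := hlen y
    have hteq : ((List.ofFn (nuAux m x)).takeWhile p).length =
        ((List.ofFn (nuAux m y)).takeWhile p).length := by
      have := congrArg List.length hxy
      omega
    have hlists : List.ofFn (nuAux m x) = List.ofFn (nuAux m y) := by
      rw [hcanon x, hcanon y, hteq, hxy]
    funext j
    have h3 := List.getElem_of_eq hlists (show (j : ℕ) < (List.ofFn (nuAux m x)).length by simp)
    simpa [List.getElem_ofFn] using h3
  · -- SurjOn
    rintro l ⟨hl1, hl2, hl3, hl4⟩
    set r := l.length with hrdef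
    have hr : 0 < r := by
      rcases Nat.eq_zero_or_pos r with h | h
      · exfalso
        have : l = [] := List.length_eq_zero_iff.mp h
        rw [this] at hl4
        exact hδ0 (by simpa using hl4.symm)
      · exact h
    set g : Fin m → 𝓞 K := fun j =>
      if h : (j : ℕ) < m - r then 0 else l[(j : ℕ) - (m - r)]'(by have := j.isLt; omega)
      with hgdef
    set x : Fin m → 𝓞 K := fun i =>
      g i.rev - (if h : (i.rev : ℕ) = 0 then 0 else g ⟨(i.rev : ℕ) - 1, by have := i.rev.isLt; omega⟩)
      with hxdef
    have hxj : ∀ j : Fin m, x j.rev =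
        g j - (if h : (j : ℕ) = 0 then 0 else g ⟨(j : ℕ) - 1, by have := j.isLt; omega⟩) := by
      intro j
      rw [hxdef]
      simp only [Fin.rev_rev]
    have hnu : ∀ j : Fin m, nuAux m x j = g j := by
      have key : ∀ k (hk : k < m), nuAux m x ⟨k, hk⟩ = g ⟨k, hk⟩ := by
        intro k
        induction k with
        | zero =>
          intro hk
          rw [nuAux_zero m x hk]
          have hrev : (⟨m - 1, by omega⟩ : Fin m) = Fin.rev ⟨0, hk⟩ := by
            ext; simp [Fin.val_rev]
          rw [hrev, hxj]
          simp
        | succ k ih =>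
          intro hk
          rw [nuAux_succ m x k hk, ih (by omega)]
          have hrev : (⟨m - 2 - k, by omega⟩ : Fin m) = Fin.rev ⟨k + 1, hk⟩ := by
            ext; simp only [Fin.val_rev]; omega
          rw [hrev, hxj]
          have hne : ((⟨k + 1, hk⟩ : Fin m) : ℕ) ≠ 0 := by simp
          rw [dif_neg hne]
          have : (⟨((⟨k + 1, hk⟩ : Fin m) : ℕ) - 1, by omega⟩ : Fin m) = ⟨k, by omega⟩ := by
            ext; simp
          rw [this]
          ring
      intro j
      have := key j j.isLt
      simpa using this
    have hofg : List.ofFn g = List.replicate (m - r) 0 ++ l := by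
      apply List.ext_getElem
      · simp; omega
      · intro i h1 h2
        rw [List.getElem_ofFn]
        by_cases hi : i < m - r
        · rw [List.getElem_append_left (by simpa using hi)]
          simp [hgdef, hi]
        · rw [List.getElem_append_right (by simpa using hi)]
          simp only [hgdef, List.length_replicate]
          rw [dif_neg (by simpa using hi)]
    have hx1 : ∀ i, Succeq K (x i) := by
      have hgen : ∀ j : Fin m, Succeq K
          (g j - (if h : (j : ℕ) = 0 then 0 else g ⟨(j : ℕ) - 1, by have := j.isLt; omega⟩)) := by
        rintro ⟨jv, hj⟩
        simp only [hgdef]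
        split_ifs with h1 h2 h3 h4 h5
        · simpa using succeq_zero'
        · simpa using succeq_zero'
        · omega
        · rw [sub_zero]
          exact Or.inr (hl2 _ (List.getElem_mem _))
        · rw [sub_zero]
          exact Or.inr (hl2 _ (List.getElem_mem _))
        · -- consecutive difference: use the chain hypothesis
          have ha : jv - 1 - (m - r) < r - 1 := by omega
          have hch := List.isChain_iff_getElem.mp hl3 (jv - 1 - (m - r)) (by omega)
          have hidx1 : jv - (m - r) = (jv - 1 - (m - r)) + 1 := by omega
          simp only [hidx1]
          exact hch
      intro i
      have h := hgen i.rev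
      rw [← hxj] at h
      rwa [Fin.rev_rev] at h
    refine ⟨x, ⟨hx1, ?_⟩, ?_⟩
    · -- weighted sum equals δ
      rw [← sum_nuAux]
      have h1 : ∑ j, nuAux m x j = ∑ j, g j := Finset.sum_congr rfl (fun j _ => hnu j)
      rw [h1]
      have h2 : ∑ j, g j = (List.ofFn g).sum := (List.sum_ofFn).symm
      rw [h2, hofg, List.sum_append, List.sum_replicate]
      simpa using hl4
    · -- f x = l
      have hofnu : List.ofFn (nuAux m x) = List.replicate (m - r) 0 ++ l := by
        rw [← hofg]
        congr 1
        funext j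
        exact hnu j
      have hfx : f x = (List.replicate (m - r) 0 ++ l).dropWhile p := by
        show List.dropWhile p (List.ofFn (nuAux m x)) = _
        rw [hofnu]
      rw [hfx]
      have hdropRep : ∀ n : ℕ, (List.replicate n (0 : 𝓞 K) ++ l).dropWhile p = l.dropWhile p := by
        intro n
        induction n with
        | zero => simp
        | succ n ih => rw [List.replicate_succ, List.cons_append, List.dropWhile_cons_of_pos (by simp [hp]), ih]
      rw [hdropRep]
      obtain ⟨a, l', rfl⟩ : ∃ a l', l = a :: l' := by
        cases l with
        | nil => simp [hrdef] at hr
        | cons a l' => exact ⟨a, l', rfl⟩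
      rw [List.dropWhile_cons_of_neg]
      simp only [hp, decide_eq_true_eq]
      exact tp_ne_zero' ψ (hl2 a (by simp))
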